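/- arXiv:1806.02604 — 5 statements merged into one kernel-verified Lean document; each statement's English description precedes it below -/
import Mathlib

section
/- Let p, q be quaternions with p·q̄ + q·p̄ = 0, and let v be a pure quaternion. Set w := p·v·p̄ + p·q̄ − q·p̄. Then w·w̄ = (p·p̄)·(4·q·q̄ − (p·p̄)·v² + 2·(q·v·p̄ − p·v·q̄)), where all factors on the right are real numbers (here v² is the real number −|v|² and q·v·p̄ − p·v·q̄ is real). -/
set_option maxHeartbeats 1000000 in
/-- For `p q̄ + q p̄ = 0`, `v` pure, and `w = p v p̄ + p q̄ − q p̄`, one has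
`w w̄ = (p p̄)(4 q q̄ − (p p̄) v² + 2 (q v p̄ − p v q̄))`, where `v²` and
`q v p̄ − p v q̄` are real numbers. -/
theorem orbit_on_moebius_quadric (p q v : Quaternion ℝ)
    (hstudy : p * star q + q * star p = 0) (hv : v.re = 0) :
    (p * v * star p + p * star q - q * star p) *
        star (p * v * star p + p * star q - q * star p) =
      (p * star p) * (4 * (q * star q) - (p * star p) * v ^ 2 +
        2 * (q * v * star p - p * v * star q)) ∧
    (∃ r : ℝ, v ^ 2 = (r : Quaternion ℝ)) ∧
    (∃ s : ℝ, q * v * star p - p * v * star q = (s : Quaternion ℝ)) := by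
  have h2 : (2 : Quaternion ℝ) = ((2:ℝ) : Quaternion ℝ) := by norm_cast
  have h4 : (4 : Quaternion ℝ) = ((4:ℝ) : Quaternion ℝ) := by norm_cast
  rw [h2, h4]
  simp only [Quaternion.ext_iff, pow_two, Quaternion.re_mul, Quaternion.imI_mul,
    Quaternion.imJ_mul, Quaternion.imK_mul, Quaternion.re_add, Quaternion.imI_add,
    Quaternion.imJ_add, Quaternion.imK_add, Quaternion.re_sub, Quaternion.imI_sub,
    Quaternion.imJ_sub, Quaternion.imK_sub, Quaternion.re_star, Quaternion.imI_star,
    Quaternion.imJ_star, Quaternion.imK_star, Quaternion.re_zero, Quaternion.imI_zero,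
    Quaternion.imJ_zero, Quaternion.imK_zero, Quaternion.re_coe, Quaternion.imI_coe,
    Quaternion.imJ_coe, Quaternion.imK_coe] at hstudy ⊢
  obtain ⟨p0,p1,p2,p3⟩ := p
  obtain ⟨q0,q1,q2,q3⟩ := q
  obtain ⟨v0,v1,v2,v3⟩ := v
  simp only [] at hv hstudy ⊢
  subst hv
  obtain ⟨h0, -, -, -⟩ := hstudy
  refine ⟨⟨?_, ?_, ?_, ?_⟩, ⟨-(v1^2+v2^2+v3^2), by ring, by ring, by ring, by ring⟩,
    ⟨q0*v1*p1*2 + q0*v2*p2*2 + (q0*v3*p3*2 - q1*v1*p0*2) + q1*v2*p3*2 + (-(q1*v3*p2*2) - v1*q2*p3*2) + (v1*q3*p2*2 - q2*v2*p0*2) + q2*v3*p1*2 + (-(v2*q3*p1*2) - q3*v3*p0*2), ?_, ?_, ?_, ?_⟩⟩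
  · linear_combination (-2*(p0*q0+p1*q1+p2*q2+p3*q3)) * h0
  · linear_combination (0:ℝ) * h0
  · linear_combination (0:ℝ) * h0
  · linear_combination (0:ℝ) * h0
  · ring
  · ring
  · ring
  · ring
end

section
/- The Study kinematic map is a group action: for dual quaternions h₁ = p₁ + q₁ε and h₂ = p₂ + q₂ε with p₁·q̄₁ + q₁·p̄₁ = 0, p₂·q̄₂ + q₂·p̄₂ = 0, p₁·p̄₁ ≠ 0, p₂·p̄₂ ≠ 0, and for every pure quaternion v, one has φ(h₁h₂, v) = φ(h₁, φ(h₂, v)), where φ(p + qε, v) = (p·v·p̄ + p·q̄ − q·p̄)/(p·p̄). -/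
open Quaternion

/-- The Study kinematic map `φ(p + qε, v) = (p v p̄ + p q̄ − q p̄)/(p p̄)`. -/
noncomputable def phi (p q v : Quaternion ℝ) : Quaternion ℝ :=
  (p * v * star p + p * star q - q * star p) / (p * star p)

lemma div_self_mul_star (a p : Quaternion ℝ) :
    a / (p * star p) = (normSq p : ℝ)⁻¹ • a := by
  rw [Quaternion.self_mul_star, div_eq_mul_inv, ← Quaternion.coe_inv,
    Quaternion.mul_coe_eq_smul]

/-- The Study kinematic map is a group action: `φ(h₁h₂, v) = φ(h₁, φ(h₂, v))`,
where `h₁h₂ = p₁p₂ + (p₁q₂ + q₁p₂)ε`. -/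
theorem study_map_group_action (p₁ q₁ p₂ q₂ v : Quaternion ℝ)
    (h₁ : p₁ * star q₁ + q₁ * star p₁ = 0)
    (h₂ : p₂ * star q₂ + q₂ * star p₂ = 0)
    (hp₁ : p₁ * star p₁ ≠ 0) (hp₂ : p₂ * star p₂ ≠ 0)
    (hv : v.re = 0) :
    phi (p₁ * p₂) (p₁ * q₂ + q₁ * p₂) v = phi p₁ q₁ (phi p₂ q₂ v) := by
  have hn₁ : normSq p₁ ≠ 0 := by
    intro h; apply hp₁; rw [Quaternion.self_mul_star, h]; simp
  have hn₂ : normSq p₂ ≠ 0 := by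
    intro h; apply hp₂; rw [Quaternion.self_mul_star, h]; simp
  set B := p₂ * v * star p₂ + p₂ * star q₂ - q₂ * star p₂ with hB
  have key : (p₁ * p₂) * v * star (p₁ * p₂) + (p₁ * p₂) * star (p₁ * q₂ + q₁ * p₂)
      - (p₁ * q₂ + q₁ * p₂) * star (p₁ * p₂)
      = p₁ * B * star p₁ + (normSq p₂ : ℝ) • (p₁ * star q₁)
        - (normSq p₂ : ℝ) • (q₁ * star p₁) := by
    have e1 : (normSq p₂ : ℝ) • (p₁ * star q₁) = p₁ * (p₂ * star p₂) * star q₁ := by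
      rw [Quaternion.self_mul_star, Quaternion.mul_coe_eq_smul, smul_mul_assoc]
    have e2 : (normSq p₂ : ℝ) • (q₁ * star p₁) = q₁ * (p₂ * star p₂) * star p₁ := by
      rw [Quaternion.self_mul_star, Quaternion.mul_coe_eq_smul, smul_mul_assoc]
    rw [e1, e2, hB]
    simp only [star_mul, star_add]
    noncomm_ring
  simp only [phi, div_self_mul_star, key, ← hB]
  rw [map_mul normSq]
  simp only [mul_smul_comm, smul_mul_assoc]
  match_scalars
  all_goals (field_simp; try ring)
end

section
/- For a dual quaternion h = p + qε with p·q̄ + q·p̄ = 0 and p·p̄ ≠ 0, the map v ↦ φ(h, v) = (p·v·p̄ + p·q̄ − q·p̄)/(p·p̄) sends pure quaternions to pure quaternions. -/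
/-- The Study kinematic map sends pure quaternions to pure quaternions. -/
theorem study_map_pure (p q v : Quaternion ℝ)
    (hstudy : p * star q + q * star p = 0)
    (hp : p * star p ≠ 0) (hv : v.re = 0) :
    (phi p q v).re = 0 := by
  have hd : p * star p = ((Quaternion.normSq p : ℝ) : Quaternion ℝ) :=
    Quaternion.self_mul_star p
  have hre : ∀ a b : Quaternion ℝ, (a * b).re = (b * a).re := by
    intro a b
    simp [Quaternion.re_mul]
    ring
  have hstudy' : (p * star q).re + (q * star p).re = 0 := by
    have := congrArg (fun x : Quaternion ℝ => x.re) hstudy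
    simpa [Quaternion.re_zero] using this
  have hqp : (q * star p).re = (p * star q).re := by
    simp [Quaternion.re_mul]
    ring
  have hpvp : (p * v * star p).re = 0 := by
    rw [hre, ← mul_assoc, Quaternion.star_mul_self]
    simp [Quaternion.re_mul, hv]
  have hnum : (p * v * star p + p * star q - q * star p).re = 0 := by
    simp only [Quaternion.re_sub, Quaternion.re_add, hpvp, hqp]
    ring
  rw [phi, hd, div_eq_mul_inv, ← Quaternion.coe_inv, Quaternion.mul_coe_eq_smul]
  simp [hnum]
end

section
/- In the lattice L = ℤα₀ ⊕ ⋯ ⊕ ℤα₅ with α₀² = 1, αᵢ² = −1 for i ≥ 1, αᵢ·αⱼ = 0 for i ≠ j, suppose C₁, C₂, C₃, C₄ are four classes, each of the form α₀ − αᵢ or 2α₀ + αᵢ − α₁ − ⋯ − α₅ for some 1 ≤ i ≤ 5, with C₁ + C₂ + C₃ + C₄ = 6α₀ − 2α₁ − 2α₂ − 2α₃ − 2α₄ − 2α₅. Then exactly two of them are of the first form and two of the second form, and there exist indices k ≠ l in {1,2,3,4} with Cₖ·Cₗ = 2. -/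
/-- The intersection form on the Picard lattice `ℤα₀ ⊕ ⋯ ⊕ ℤα₅`. -/
def B (x y : Fin 6 → ℤ) : ℤ :=
  x 0 * y 0 - (x 1 * y 1 + x 2 * y 2 + x 3 * y 3 + x 4 * y 4 + x 5 * y 5)

/-- The basis vectors `α₀, …, α₅`. -/
def α (i : Fin 6) : Fin 6 → ℤ := Pi.single i 1

/-- Conic classes of the first form: `α₀ − αᵢ` for some `1 ≤ i ≤ 5`. -/
def FirstForm (C : Fin 6 → ℤ) : Prop := ∃ i : Fin 5, C = α 0 - α i.succ

/-- Conic classes of the second form: `2α₀ + αᵢ − α₁ − ⋯ − α₅`. -/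
def SecondForm (C : Fin 6 → ℤ) : Prop :=
  ∃ i : Fin 5, C = (2 : ℤ) • α 0 + α i.succ - α 1 - α 2 - α 3 - α 4 - α 5

/-- Parametrization of the conic classes by a `Bool` (form) and an index. -/
def V (b : Bool) (i : Fin 5) : Fin 6 → ℤ :=
  if b then α 0 - α i.succ
  else (2 : ℤ) • α 0 + α i.succ - α 1 - α 2 - α 3 - α 4 - α 5

/-- Abbreviation for `−2κ`. -/
def T : Fin 6 → ℤ :=
  (6 : ℤ) • α 0 - (2 : ℤ) • α 1 - (2 : ℤ) • α 2 - (2 : ℤ) • α 3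
    - (2 : ℤ) • α 4 - (2 : ℤ) • α 5

set_option maxRecDepth 40000 in
/-- If four conic classes sum to `−2κ`, exactly two of the four are of the
first form (boolean pattern lemma). -/
lemma bool_pattern : ∀ (b₀ b₁ b₂ b₃ : Bool) (i₀ i₁ i₂ i₃ : Fin 5),
    V b₀ i₀ + V b₁ i₁ + V b₂ i₂ + V b₃ i₃ = T →
    ((b₀ && b₁ && !b₂ && !b₃) || (b₀ && b₂ && !b₁ && !b₃) || (b₀ && b₃ && !b₁ && !b₂) ||
     (b₁ && b₂ && !b₀ && !b₃) || (b₁ && b₃ && !b₀ && !b₂) || (b₂ && b₃ && !b₀ && !b₁)) = true := by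
  decide

/-- The index of one of the first-form classes coincides with the index
of one of the second-form classes. -/
lemma core : ∀ i j p q : Fin 5,
    V true i + V true j + V false p + V false q = T → (i = p ∨ i = q) := by decide

lemma Btf : ∀ i : Fin 5, B (V true i) (V false i) = 2 := by decide

/-- Helper handling one boolean pattern. -/
lemma main_case (C : Fin 4 → (Fin 6 → ℤ)) (k l m n : Fin 4)
    (hkl : k ≠ l) (hkm : k ≠ m) (hkn : k ≠ n) (hlm : l ≠ m) (hln : l ≠ n)
    (hcov : ∀ x : Fin 4, x = k ∨ x = l ∨ x = m ∨ x = n)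
    (i j p q : Fin 5)
    (hk : C k = V true i) (hl : C l = V true j) (hm : C m = V false p) (hn : C n = V false q)
    (hs : V true i + V true j + V false p + V false q = T) :
    (∃ k l : Fin 4, k ≠ l ∧ FirstForm (C k) ∧ FirstForm (C l) ∧
      ∀ m : Fin 4, m ≠ k → m ≠ l → SecondForm (C m)) ∧
    ∃ k l : Fin 4, k ≠ l ∧ B (C k) (C l) = 2 := by
  constructor
  · refine ⟨k, l, hkl, ⟨i, hk⟩, ⟨j, hl⟩, ?_⟩
    intro x hxk hxl
    rcases hcov x with h | h | h | h
    · exact absurd h hxk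
    · exact absurd h hxl
    · exact ⟨p, by rw [h, hm]; rfl⟩
    · exact ⟨q, by rw [h, hn]; rfl⟩
  · rcases core i j p q hs with h | h
    · exact ⟨k, m, hkm, by rw [hk, hm, ← h]; exact Btf i⟩
    · exact ⟨k, n, hkn, by rw [hk, hn, ← h]; exact Btf i⟩

/-- If four conic classes sum to `−2κ = 6α₀ − 2α₁ − ⋯ − 2α₅`, then exactly two
are of each form, and two of them intersect with multiplicity `2`. -/
theorem four_conics_cospherical (C : Fin 4 → (Fin 6 → ℤ))
    (hconic : ∀ k, FirstForm (C k) ∨ SecondForm (C k))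
    (hsum : C 0 + C 1 + C 2 + C 3 =
      (6 : ℤ) • α 0 - (2 : ℤ) • α 1 - (2 : ℤ) • α 2 - (2 : ℤ) • α 3
        - (2 : ℤ) • α 4 - (2 : ℤ) • α 5) :
    (∃ k l : Fin 4, k ≠ l ∧ FirstForm (C k) ∧ FirstForm (C l) ∧
      ∀ m : Fin 4, m ≠ k → m ≠ l → SecondForm (C m)) ∧
    ∃ k l : Fin 4, k ≠ l ∧ B (C k) (C l) = 2 := by
  have h : ∀ k, ∃ p : Bool × Fin 5, C k = V p.1 p.2 := by
    intro k
    rcases hconic k with ⟨i, hi⟩ | ⟨i, hi⟩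
    · exact ⟨(true, i), hi⟩
    · exact ⟨(false, i), hi⟩
  choose f hf using h
  have hsum' : V (f 0).1 (f 0).2 + V (f 1).1 (f 1).2 + V (f 2).1 (f 2).2
      + V (f 3).1 (f 3).2 = T := by
    rw [← hf 0, ← hf 1, ← hf 2, ← hf 3]; exact hsum
  have hb := bool_pattern _ _ _ _ _ _ _ _ hsum'
  simp only [Bool.or_eq_true, Bool.and_eq_true, Bool.not_eq_true'] at hb
  rcases hb with ((((⟨⟨⟨h0, h1⟩, h2⟩, h3⟩ | ⟨⟨⟨h0, h2⟩, h1⟩, h3⟩) | ⟨⟨⟨h0, h3⟩, h1⟩, h2⟩) |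
    ⟨⟨⟨h1, h2⟩, h0⟩, h3⟩) | ⟨⟨⟨h1, h3⟩, h0⟩, h2⟩) | ⟨⟨⟨h2, h3⟩, h0⟩, h1⟩ <;>
    rw [h0, h1, h2, h3] at hsum'
  · exact main_case C 0 1 2 3 (by decide) (by decide) (by decide) (by decide) (by decide)
      (by decide) _ _ _ _ (by rw [hf 0, h0]) (by rw [hf 1, h1]) (by rw [hf 2, h2])
      (by rw [hf 3, h3]) hsum'
  · exact main_case C 0 2 1 3 (by decide) (by decide) (by decide) (by decide) (by decide)
      (by decide) _ _ _ _ (by rw [hf 0, h0]) (by rw [hf 2, h2]) (by rw [hf 1, h1])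
      (by rw [hf 3, h3]) (by rw [← hsum']; ring)
  · exact main_case C 0 3 1 2 (by decide) (by decide) (by decide) (by decide) (by decide)
      (by decide) _ _ _ _ (by rw [hf 0, h0]) (by rw [hf 3, h3]) (by rw [hf 1, h1])
      (by rw [hf 2, h2]) (by rw [← hsum']; ring)
  · exact main_case C 1 2 0 3 (by decide) (by decide) (by decide) (by decide) (by decide)
      (by decide) _ _ _ _ (by rw [hf 1, h1]) (by rw [hf 2, h2]) (by rw [hf 0, h0])
      (by rw [hf 3, h3]) (by rw [← hsum']; ring)
  · exact main_case C 1 3 0 2 (by decide) (by decide) (by decide) (by decide) (by decide)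
      (by decide) _ _ _ _ (by rw [hf 1, h1]) (by rw [hf 3, h3]) (by rw [hf 0, h0])
      (by rw [hf 2, h2]) (by rw [← hsum']; ring)
  · exact main_case C 2 3 0 1 (by decide) (by decide) (by decide) (by decide) (by decide)
      (by decide) _ _ _ _ (by rw [hf 2, h2]) (by rw [hf 3, h3]) (by rw [hf 0, h0])
      (by rw [hf 1, h1]) (by rw [← hsum']; ring)
end

section
/- Let p, q be quaternions with p·q̄ + q·p̄ = 0 and p·p̄ ≠ 0, let v be a pure quaternion, and write w = p·v·p̄ + p·q̄ − q·p̄ = w₁i + w₂j + w₃k. Then the point (p·p̄ : w₁ : w₂ : w₃ : 4q·q̄ − (p·p̄)v² + 2(q·v·p̄ − p·v·q̄)) is a well-defined point of P⁴(ℝ) (not all coordinates vanish) lying on the Möbius quadric x₀x₄ = x₁² + x₂² + x₃². -/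
/-- For `p q̄ + q p̄ = 0`, `p p̄ ≠ 0`, `v` pure and `w = p v p̄ + p q̄ − q p̄ =
w₁i + w₂j + w₃k`, the tuple
`(p p̄ : w₁ : w₂ : w₃ : 4 q q̄ − (p p̄)v² + 2(q v p̄ − p v q̄))` is a well-defined
point of `P⁴(ℝ)` lying on the Möbius quadric `x₀x₄ = x₁² + x₂² + x₃²`. -/
theorem orbit_point_on_moebius_quadric (p q v : Quaternion ℝ)
    (hstudy : p * star q + q * star p = 0)
    (hp : p * star p ≠ 0) (hv : v.re = 0) :
    (![(p * star p).re,
        (p * v * star p + p * star q - q * star p).imI,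
        (p * v * star p + p * star q - q * star p).imJ,
        (p * v * star p + p * star q - q * star p).imK,
        (4 * (q * star q) - (p * star p) * v ^ 2 +
          2 * (q * v * star p - p * v * star q)).re] : Fin 5 → ℝ) ≠ 0 ∧
    (p * star p).re *
        (4 * (q * star q) - (p * star p) * v ^ 2 +
          2 * (q * v * star p - p * v * star q)).re =
      (p * v * star p + p * star q - q * star p).imI ^ 2 +
        (p * v * star p + p * star q - q * star p).imJ ^ 2 +
        (p * v * star p + p * star q - q * star p).imK ^ 2 := by
  have hre : (p * star p).re ≠ 0 := by
    rw [Quaternion.self_mul_star, Quaternion.re_coe]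
    exact Quaternion.normSq_ne_zero.2 fun h => hp (by simp [h])
  constructor
  · intro hzero
    exact hre (by simpa using congrFun hzero 0)
  · have h2 : (2 : Quaternion ℝ) = ((2 : ℝ) : Quaternion ℝ) := by norm_cast
    have h4 : (4 : Quaternion ℝ) = ((4 : ℝ) : Quaternion ℝ) := by norm_cast
    rw [h2, h4]
    simp only [Quaternion.ext_iff] at hstudy
    simp only [Quaternion.re_mul, Quaternion.imI_mul, Quaternion.imJ_mul,
      Quaternion.imK_mul, Quaternion.re_star, Quaternion.imI_star,
      Quaternion.imJ_star, Quaternion.imK_star, Quaternion.re_add,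
      Quaternion.imI_add, Quaternion.imJ_add, Quaternion.imK_add,
      Quaternion.re_sub, Quaternion.imI_sub, Quaternion.imJ_sub,
      Quaternion.imK_sub, pow_two, Quaternion.re_zero, Quaternion.imI_zero,
      Quaternion.imJ_zero, Quaternion.imK_zero, Quaternion.re_coe,
      Quaternion.imI_coe, Quaternion.imJ_coe, Quaternion.imK_coe] at hstudy ⊢
    obtain ⟨a, b, c, d⟩ := p
    obtain ⟨e, f, g, h⟩ := q
    obtain ⟨x, y, z, t⟩ := v
    simp only [QuaternionAlgebra.re] at hv
    subst hv
    obtain ⟨h1, -, -, -⟩ := hstudy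
    linear_combination (2 * (a * e + b * f + c * g + d * h)) * h1
end
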